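/- Let (M, μ) be a probability measure space, let 1 < p < q be reals, h < 0, and η₀ > 0. Let f : M → ℝ be measurable and essentially bounded with F = ∫ |f⁻| dμ > 0 and 0 < esssup f ≤ ((p−1)η₀/(4p))·F. Let v : M → ℝ be measurable with k = ∫ |v|^q dμ, and assume ∫ |f⁻|·|v|^q dμ ≥ η₀·k·F. Then (h/p)·∫ |v|^p dμ − (1/q)·∫ f·|v|^q dμ ≥ ((3p+1)η₀F/(4pq))·k − (|h|/p)·k^(p/q). -/

import Mathlib

open MeasureTheory Real

theorem stmt14 {M : Type*} [MeasurableSpace M] (μ : Measure M) [IsProbabilityMeasure μ]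
    (p q h η₀ F k : ℝ) (hp : 1 < p) (hpq : p < q) (hh : h < 0) (hη : 0 < η₀)
    (f v : M → ℝ) (hf : Measurable f) (hbdd : ∃ C, ∀ᵐ x ∂μ, |f x| ≤ C)
    (hF : F = ∫ x, max (-f x) 0 ∂μ) (hFpos : 0 < F)
    (hSpos : 0 < essSup f μ)
    (hSsmall : essSup f μ ≤ (p - 1) * η₀ / (4 * p) * F)
    (hv : Measurable v) (hvint : Integrable (fun x => |v x| ^ q) μ)
    (hk : k = ∫ x, |v x| ^ q ∂μ)
    (hfv : ∫ x, max (-f x) 0 * |v x| ^ q ∂μ ≥ η₀ * k * F) :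
    h / p * ∫ x, |v x| ^ p ∂μ - (1 / q) * ∫ x, f x * |v x| ^ q ∂μ
      ≥ (3 * p + 1) * η₀ * F / (4 * p * q) * k - |h| / p * k ^ (p / q) := by
  obtain ⟨C, hC⟩ := hbdd
  have hp0 : (0:ℝ) < p := lt_trans one_pos hp
  have hq0 : (0:ℝ) < q := lt_trans hp0 hpq
  have hk0 : 0 ≤ k := by
    rw [hk]
    exact integral_nonneg fun x => Real.rpow_nonneg (abs_nonneg _) q
  -- Memℒp facts
  have hvq : MemLp v (ENNReal.ofReal q) μ := by
    rw [← memLp_norm_rpow_iff (q := ENNReal.ofReal q) hv.aestronglyMeasurable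
      (ne_of_gt (ENNReal.ofReal_pos.mpr hq0)) ENNReal.ofReal_ne_top]
    rw [ENNReal.div_self (ne_of_gt (ENNReal.ofReal_pos.mpr hq0)) ENNReal.ofReal_ne_top, ENNReal.toReal_ofReal hq0.le,
      memLp_one_iff_integrable]
    simpa [Real.norm_eq_abs] using hvint
  have hvp : MemLp (fun x => |v x| ^ p) (ENNReal.ofReal (q / p)) μ := by
    have h2 := hvq.norm_rpow_div (ENNReal.ofReal p)
    rw [ENNReal.toReal_ofReal hp0.le] at h2
    rw [ENNReal.ofReal_div_of_pos hp0]
    simpa [Real.norm_eq_abs] using h2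
  -- Hölder: ∫ |v|^p ≤ k ^ (p/q)
  have hconj : (q / p).HolderConjugate (q / (q - p)) := by
    rw [Real.holderConjugate_iff]
    constructor
    · exact (one_lt_div hp0).2 hpq
    · have hqp : q - p ≠ 0 := by linarith
      field_simp
      ring
  have hA : ∫ x, |v x| ^ p ∂μ ≤ k ^ (p / q) := by
    have hH := integral_mul_le_Lp_mul_Lq_of_nonneg hconj
      (f := fun x => |v x| ^ p) (g := fun _ => (1:ℝ))
      (Filter.Eventually.of_forall fun x => Real.rpow_nonneg (abs_nonneg _) p)
      (Filter.Eventually.of_forall fun _ => zero_le_one) hvp (memLp_const 1)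
    simp only [mul_one, Real.one_rpow] at hH
    have hpow : ∀ x, (|v x| ^ p) ^ (q / p) = |v x| ^ q := by
      intro x
      rw [← Real.rpow_mul (abs_nonneg _)]
      congr 1
      field_simp
    simp only [hpow] at hH
    have hone : ∫ _x, (1:ℝ) ∂μ = 1 := by simp
    rw [hone, Real.one_rpow, mul_one, one_div_div, ← hk] at hH
    exact hH
  -- bound on ∫ f |v|^q
  have hCnn : ∀ᵐ x ∂μ, ‖max (-f x) 0‖ ≤ |C| := by
    filter_upwards [hC] with x hx
    rw [Real.norm_eq_abs, abs_of_nonneg (le_max_right _ _)]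
    rcases le_total (f x) 0 with h' | h'
    · rw [max_eq_left (by linarith)]
      calc -f x ≤ |f x| := neg_le_abs _
        _ ≤ C := hx
        _ ≤ |C| := le_abs_self _
    · rw [max_eq_right (by linarith)]
      exact abs_nonneg _
  have hCpn : ∀ᵐ x ∂μ, ‖max (f x) 0‖ ≤ |C| := by
    filter_upwards [hC] with x hx
    rw [Real.norm_eq_abs, abs_of_nonneg (le_max_right _ _)]
    exact max_le ((le_abs_self _).trans (hx.trans (le_abs_self _))) (abs_nonneg _)
  have hint2 : Integrable (fun x => max (-f x) 0 * |v x| ^ q) μ :=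
    hvint.bdd_mul ((hf.neg.max measurable_const).aestronglyMeasurable) hCnn
  have hint3 : Integrable (fun x => max (f x) 0 * |v x| ^ q) μ :=
    hvint.bdd_mul ((hf.max measurable_const).aestronglyMeasurable) hCpn
  have hbound : ∀ᵐ x ∂μ, f x ≤ essSup f μ := by
    apply ae_le_essSup
    refine ⟨C, Filter.eventually_map.2 ?_⟩
    filter_upwards [hC] with x hx
    exact (le_abs_self _).trans hx
  have hsplit : ∫ x, f x * |v x| ^ q ∂μ
      = (∫ x, max (f x) 0 * |v x| ^ q ∂μ) - ∫ x, max (-f x) 0 * |v x| ^ q ∂μ := by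
    rw [← integral_sub hint3 hint2]
    apply integral_congr_ae
    apply Filter.Eventually.of_forall
    intro x
    have hid : max (f x) 0 - max (-f x) 0 = f x := by
      rcases le_total (f x) 0 with h' | h'
      · rw [max_eq_right h', max_eq_left (by linarith)]; ring
      · rw [max_eq_left h', max_eq_right (by linarith)]; ring
    show f x * |v x| ^ q = max (f x) 0 * |v x| ^ q - max (-f x) 0 * |v x| ^ q
    rw [← sub_mul, hid]
  have hplus : ∫ x, max (f x) 0 * |v x| ^ q ∂μ ≤ essSup f μ * k := by
    have hle : ∫ x, max (f x) 0 * |v x| ^ q ∂μ ≤ ∫ x, essSup f μ * |v x| ^ q ∂μ := by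
      apply integral_mono_ae hint3 (hvint.const_mul _)
      filter_upwards [hbound] with x hx
      exact mul_le_mul_of_nonneg_right (max_le hx hSpos.le)
        (Real.rpow_nonneg (abs_nonneg _) q)
    calc ∫ x, max (f x) 0 * |v x| ^ q ∂μ ≤ ∫ x, essSup f μ * |v x| ^ q ∂μ := hle
      _ = essSup f μ * k := by rw [integral_const_mul, ← hk]
  have hB : ∫ x, f x * |v x| ^ q ∂μ ≤ ((p - 1) * η₀ / (4 * p) * F - η₀ * F) * k := by
    rw [hsplit]
    have hSk : essSup f μ * k ≤ ((p - 1) * η₀ / (4 * p) * F) * k :=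
      mul_le_mul_of_nonneg_right hSsmall hk0
    nlinarith [hfv, hplus]
  -- final arithmetic
  rw [ge_iff_le, abs_of_neg hh]
  have e : (3 * p + 1) * η₀ * F / (4 * p * q) * k - (-h) / p * k ^ (p / q)
      = h / p * k ^ (p / q) - (1 / q) * (((p - 1) * η₀ / (4 * p) * F - η₀ * F) * k) := by
    field_simp
    ring
  rw [e]
  have h1 : h / p * k ^ (p / q) ≤ h / p * ∫ x, |v x| ^ p ∂μ :=
    mul_le_mul_of_nonpos_left hA (le_of_lt (div_neg_of_neg_of_pos hh hp0))
  have h2 : (1 / q) * ∫ x, f x * |v x| ^ q ∂μ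
      ≤ (1 / q) * (((p - 1) * η₀ / (4 * p) * F - η₀ * F) * k) :=
    mul_le_mul_of_nonneg_left hB (by positivity)
  linarith
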